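/- Let j be a positive even integer and let a, b be reals with a ≤ -j-1 and |b| < 1. Define the 2j+1 real numbers x_{2s} = -(-1)^s (2s - j - b + a)/4 - 1/4 for 0 ≤ s ≤ j and x_{2s+1} = -(-1)^s (2s - j - b - a)/4 - 1/4 for 0 ≤ s ≤ j-1. Then these 2j+1 numbers are pairwise distinct. -/
import Mathlib


/-- The Bannai-Ito bi-lattice points: `x_{2s} = -(-1)^s (2s-j-b+a)/4 - 1/4`,
`x_{2s+1} = -(-1)^s (2s-j-b-a)/4 - 1/4`. -/
noncomputable def xgrid (j : ℕ) (a b : ℝ) (m : ℕ) : ℝ :=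
  if m % 2 = 0 then
    -(-1 : ℝ) ^ (m / 2) * (2 * ((m / 2 : ℕ) : ℝ) - j - b + a) / 4 - 1/4
  else
    -(-1 : ℝ) ^ (m / 2) * (2 * ((m / 2 : ℕ) : ℝ) - j - b - a) / 4 - 1/4

lemma x0 (j : ℕ) (a b : ℝ) (u : ℕ) :
    xgrid j a b (4*u) = -(4*(u:ℝ) - j - b + a)/4 - 1/4 := by
  have h1 : 4*u % 2 = 0 := by omega
  have h2 : 4*u / 2 = 2*u := by omega
  simp only [xgrid, h1, h2, if_true, pow_mul, neg_one_sq, one_pow]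
  push_cast
  ring

lemma x1 (j : ℕ) (a b : ℝ) (u : ℕ) :
    xgrid j a b (4*u+1) = -(4*(u:ℝ) - j - b - a)/4 - 1/4 := by
  have h1 : (4*u+1) % 2 = 1 := by omega
  have h2 : (4*u+1) / 2 = 2*u := by omega
  simp only [xgrid, h1, h2, one_ne_zero, if_false, pow_mul, neg_one_sq, one_pow]
  push_cast
  ring

lemma x2 (j : ℕ) (a b : ℝ) (u : ℕ) :
    xgrid j a b (4*u+2) = (4*(u:ℝ) + 2 - j - b + a)/4 - 1/4 := by
  have h1 : (4*u+2) % 2 = 0 := by omega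
  have h2 : (4*u+2) / 2 = 2*u+1 := by omega
  simp only [xgrid, h1, h2, if_true, pow_succ, pow_mul, neg_one_sq, one_pow]
  push_cast
  ring

lemma x3 (j : ℕ) (a b : ℝ) (u : ℕ) :
    xgrid j a b (4*u+3) = (4*(u:ℝ) + 2 - j - b - a)/4 - 1/4 := by
  have h1 : (4*u+3) % 2 = 1 := by omega
  have h2 : (4*u+3) / 2 = 2*u+1 := by omega
  simp only [xgrid, h1, h2, one_ne_zero, if_false, pow_succ, pow_mul, neg_one_sq, one_pow]
  push_cast
  ring

lemma bodd (j u v : ℕ) (b : ℝ) (hj : Even j) (hb : |b| < 1)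
    (h : 2*b = 4*(u:ℝ) + 4*(v:ℝ) + 2 - 2*(j:ℝ)) : False := by
  obtain ⟨k, hk⟩ := hj
  subst hk
  rw [abs_lt] at hb
  have h1 : (b : ℝ) = 2*(((u:ℤ)+(v:ℤ)+1-(k:ℤ) : ℤ):ℝ) - 1 := by push_cast at h ⊢; linarith
  have h2 : (0:ℝ) < (((u:ℤ)+(v:ℤ)+1-(k:ℤ) : ℤ):ℝ) := by linarith [hb.1]
  have h3 : (((u:ℤ)+(v:ℤ)+1-(k:ℤ) : ℤ):ℝ) < 1 := by linarith [hb.2]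
  have h2' : (0:ℤ) < (u:ℤ)+(v:ℤ)+1-(k:ℤ) := by exact_mod_cast h2
  have h3' : ((u:ℤ)+(v:ℤ)+1-(k:ℤ)) < 1 := by exact_mod_cast h3
  omega

/-- The `2j+1` points of the Bannai-Ito bi-lattice are pairwise distinct when
`a ≤ -j-1` and `|b| < 1`. -/
theorem stmt6 (j : ℕ) (hj : Even j) (hj0 : 0 < j) (a b : ℝ)
    (ha : a ≤ -(j : ℝ) - 1) (hb : |b| < 1) :
    ∀ s ≤ 2 * j, ∀ t ≤ 2 * j, s ≠ t → xgrid j a b s ≠ xgrid j a b t := by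
  intro s hs t ht hst heq
  have hb1 : -1 < b := (abs_lt.mp hb).1
  have hb2 : b < 1 := (abs_lt.mp hb).2
  obtain ⟨u, r, hr, rfl⟩ : ∃ u r, r < 4 ∧ s = 4*u + r := ⟨s/4, s%4, by omega, by omega⟩
  obtain ⟨v, q, hq, rfl⟩ : ∃ v q, q < 4 ∧ t = 4*v + q := ⟨t/4, t%4, by omega, by omega⟩
  have hsr : 4*(u:ℝ) + (r:ℝ) ≤ 2*(j:ℝ) := by exact_mod_cast hs
  have htr : 4*(v:ℝ) + (q:ℝ) ≤ 2*(j:ℝ) := by exact_mod_cast ht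
  interval_cases r <;> interval_cases q <;>
    simp only [add_zero, x0, x1, x2, x3] at heq <;>
    push_cast at hsr htr <;>
    first
      | linarith
      | exact absurd (by exact_mod_cast (show (u:ℝ) = (v:ℝ) by linarith) : u = v) (by omega)
      | exact bodd j u v b hj hb (by linarith)
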